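/- A finite semigroup S has trivial local monoids if and only if there exists some k ≥ 1 such that S satisfies the LI_k identity. -/

import Mathlib

section aux
variable {S : Type*} [Semigroup S]

/-- coe times anything in WithOne is not 1. -/
lemma coe_mul_ne_one (s : S) (x : WithOne S) : (s : WithOne S) * x ≠ 1 := by
  induction x using WithOne.recOneCoe with
  | one => simpa using WithOne.coe_ne_one
  | coe t => rw [← WithOne.coe_mul]; exact WithOne.coe_ne_one

/-- positive power of a non-one element is non-one -/
lemma pow_ne_one_of_ne_one {a : WithOne S} (ha : a ≠ 1) {t : ℕ} (ht : 1 ≤ t) :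
    a ^ t ≠ 1 := by
  obtain ⟨r, rfl⟩ := Nat.exists_eq_add_of_le ht
  obtain ⟨s, rfl⟩ := WithOne.ne_one_iff_exists.mp ha
  rw [add_comm, pow_succ']
  exact coe_mul_ne_one s _

/-- product of a nonempty list of non-one elements is non-one -/
lemma prod_ne_one {l : List (WithOne S)} (hne : l ≠ []) (h : ∀ a ∈ l, a ≠ 1) :
    l.prod ≠ 1 := by
  cases l with
  | nil => exact absurd rfl hne
  | cons a t =>
    rw [List.prod_cons]
    obtain ⟨s, rfl⟩ := WithOne.ne_one_iff_exists.mp (h a List.mem_cons_self)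
    exact coe_mul_ne_one s _

/-- every element of a finite monoid has a positive idempotent power -/
lemma exists_idem_pow {M : Type*} [Monoid M] [Finite M] (a : M) :
    ∃ t : ℕ, 1 ≤ t ∧ a ^ t * a ^ t = a ^ t := by
  obtain ⟨i, j, hij, hpow⟩ := Finite.exists_ne_map_eq_of_infinite (fun n : ℕ => a ^ n)
  wlog hlt : i < j generalizing i j
  · exact this j i hij.symm hpow.symm (by omega)
  set d := j - i with hd
  have hd1 : 1 ≤ d := by omega
  have hstep : ∀ m, i ≤ m → a ^ (m + d) = a ^ m := by
    intro m hm
    have : a ^ (m + d) = a ^ (m - i) * a ^ (i + d) := by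
      rw [← pow_add]; congr 1; omega
    rw [this, show i + d = j by omega, ← hpow, ← pow_add, show m - i + i = m by omega]
  have hiter : ∀ c m, i ≤ m → a ^ (m + c * d) = a ^ m := by
    intro c
    induction c with
    | zero => simp
    | succ c ih =>
      intro m hm
      have : m + (c + 1) * d = (m + d) + c * d := by ring
      rw [this, ih _ (by omega), hstep _ hm]
  refine ⟨d * (i + 1), by nlinarith, ?_⟩
  rw [← pow_add]
  have : d * (i + 1) + d * (i + 1) = d * (i + 1) + (i + 1) * d := by ring
  rw [this, hiter (i + 1) _ (by nlinarith)]

end aux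

section fact
variable {S : Type*} [Semigroup S] [Finite S]

instance : Finite (WithOne S) := by
  have := Fintype.ofFinite S
  exact inferInstanceAs (Finite (Option S))

/-- any sufficiently long product of non-one elements of `WithOne S` factors through an
idempotent -/
lemma exists_idem_factor (l : List (WithOne S)) (hmem : ∀ a ∈ l, a ≠ 1)
    (hlen : Nat.card S + 1 ≤ l.length) :
    ∃ a e b : WithOne S, e ≠ 1 ∧ e * e = e ∧ l.prod = a * e * b := by
  classical
  have : Nonempty S := by
    rcases l with _ | ⟨a, t⟩
    · simp at hlen
    · obtain ⟨s, _⟩ := WithOne.ne_one_iff_exists.mp (hmem a List.mem_cons_self)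
      exact ⟨s⟩
  have := Fintype.ofFinite S
  set n := Nat.card S with hn
  -- prefix products
  set p : Fin (n + 1) → WithOne S := fun i => (l.take (i.1 + 1)).prod with hp
  have hpne : ∀ i, p i ≠ 1 := by
    intro i
    apply prod_ne_one
    · have : (l.take (i.1 + 1)).length = i.1 + 1 := by
        rw [List.length_take]; omega
      intro h; rw [h] at this; simp at this
    · exact fun a ha => hmem a (List.take_subset _ _ ha)
  -- pick preimages in S
  choose q hq using fun i => WithOne.ne_one_iff_exists.mp (hpne i)
  -- pigeonhole
  have hcard : Fintype.card S < Fintype.card (Fin (n + 1)) := by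
    simp [hn, Nat.card_eq_fintype_card]
  obtain ⟨i, j, hij, hqeq⟩ := Fintype.exists_ne_map_eq_of_card_lt q hcard
  have hpeq : p i = p j := by rw [← hq i, ← hq j, hqeq]
  wlog hlt : i < j generalizing i j
  · exact this j i hij.symm hqeq.symm hpeq.symm (by omega)
  -- p j = p i * m
  set m := ((l.drop (i.1 + 1)).take (j.1 - i.1)).prod with hm
  have hsplit : p j = p i * m := by
    have h1 : (j.1 : ℕ) + 1 = (i.1 + 1) + (j.1 - i.1) := by omega
    rw [hp]
    simp only
    rw [h1, List.take_add, List.prod_append]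
  have hmne : m ≠ 1 := by
    apply prod_ne_one
    · have hlength : ((l.drop (i.1 + 1)).take (j.1 - i.1)).length = j.1 - i.1 := by
        rw [List.length_take, List.length_drop]
        have := j.2
        omega
      intro h; rw [h] at hlength; simp at hlength
      omega
    · exact fun a ha => hmem a (List.drop_subset _ _ (List.take_subset _ _ ha))
  -- idempotent power of m
  obtain ⟨t, ht1, hidem⟩ := exists_idem_pow m
  have hstab : ∀ c, 1 ≤ c → p i * m ^ c = p i := by
    intro c
    induction c with
    | zero => omega
    | succ c ih =>
      intro _
      rcases Nat.eq_zero_or_pos c with rfl | hc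
      · rw [pow_one, ← hsplit]; exact hpeq.symm
      · rw [pow_succ, ← mul_assoc, ih hc, ← hsplit]; exact hpeq.symm
  refine ⟨p i, m ^ t, (l.drop (j.1 + 1)).prod, pow_ne_one_of_ne_one hmne ht1, hidem, ?_⟩
  have hl : l.prod = p j * (l.drop (j.1 + 1)).prod := by
    rw [hp]; simp only
    rw [← List.prod_append, List.take_append_drop]
  conv_lhs => rw [hl, ← hpeq, ← hstab t ht1]

end fact

/-- A semigroup `S` satisfies the LI_k identity if
`x₁⋯x_k · z · y_k⋯y₁ = x₁⋯x_k · y_k⋯y₁` for all `x₁,…,x_k, y₁,…,y_k, z ∈ S`.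
Products of the (non-empty, for `k ≥ 1`) sequences are computed in the monoid
`WithOne S`, into which `S` embeds. -/
def SatisfiesLI (S : Type*) [Semigroup S] (k : ℕ) : Prop :=
  ∀ (x y : Fin k → S) (z : S),
    (List.ofFn fun i => (x i : WithOne S)).prod * (z : WithOne S) *
        ((List.ofFn fun i => (y i : WithOne S)).reverse.prod) =
      (List.ofFn fun i => (x i : WithOne S)).prod *
        ((List.ofFn fun i => (y i : WithOne S)).reverse.prod)

/-- A finite semigroup has trivial local monoids if and only if it satisfies the
LI_k identity for some `k ≥ 1`. -/
theorem stmt_6 {S : Type*} [Semigroup S] [Finite S] :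
    (∀ e x : S, e * e = e → e * x * e = e) ↔ ∃ k : ℕ, 1 ≤ k ∧ SatisfiesLI S k := by
  constructor
  · intro h
    have H : ∀ e x : WithOne S, e ≠ 1 → e * e = e → e * x * e = e := by
      intro e x he hee
      obtain ⟨s, rfl⟩ := WithOne.ne_one_iff_exists.mp he
      have hs : s * s = s := by
        rw [← WithOne.coe_mul] at hee; exact WithOne.coe_inj.mp hee
      induction x using WithOne.recOneCoe with
      | one => rw [mul_one, ← WithOne.coe_mul]; exact congrArg _ hs
      | coe u =>
        rw [← WithOne.coe_mul, ← WithOne.coe_mul]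
        exact congrArg _ (h s u hs)
    have claim : ∀ e f u : WithOne S, e ≠ 1 → f ≠ 1 → e * e = e → f * f = f →
        e * u * f = e * f := by
      intro e f u he hf hee hff
      have h1 : f * e * f = f := H f e hf hff
      have h2 : e * (u * f) * e = e := H e (u * f) he hee
      calc e * u * f = e * u * (f * e * f) := by rw [h1]
        _ = (e * (u * f) * e) * f := by simp only [mul_assoc]
        _ = e * f := by rw [h2]
    refine ⟨Nat.card S + 1, by omega, ?_⟩
    intro x y z
    set l1 := List.ofFn (fun i => (x i : WithOne S)) with hl1
    set l2 := (List.ofFn (fun i => (y i : WithOne S))).reverse with hl2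
    have hm1 : ∀ a ∈ l1, a ≠ 1 := by
      intro a ha
      rw [hl1, List.mem_ofFn] at ha
      obtain ⟨i, rfl⟩ := ha
      exact WithOne.coe_ne_one
    have hm2 : ∀ a ∈ l2, a ≠ 1 := by
      intro a ha
      rw [hl2, List.mem_reverse, List.mem_ofFn] at ha
      obtain ⟨i, rfl⟩ := ha
      exact WithOne.coe_ne_one
    obtain ⟨a, e, b, he, hee, hP⟩ := exists_idem_factor l1 hm1 (by simp [hl1])
    obtain ⟨c, f, d, hf, hff, hQ⟩ := exists_idem_factor l2 hm2 (by simp [hl2])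
    rw [hP, hQ]
    have k1 : e * (b * ((z : WithOne S) * (c * (f * d)))) = e * (f * d) := by
      rw [show b * ((z : WithOne S) * (c * (f * d))) = (b * ↑z * c) * (f * d) by
        simp only [mul_assoc]]
      rw [← mul_assoc, ← mul_assoc, claim e f _ he hf hee hff, mul_assoc]
    have k2 : e * (b * (c * (f * d))) = e * (f * d) := by
      rw [show b * (c * (f * d)) = (b * c) * (f * d) by simp only [mul_assoc]]
      rw [← mul_assoc, ← mul_assoc, claim e f _ he hf hee hff, mul_assoc]
    simp only [mul_assoc]
    rw [k1, k2]
  · rintro ⟨k, hk, hLI⟩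
    intro e x hee
    have hid : IsIdempotentElem (e : WithOne S) := by
      rw [IsIdempotentElem, ← WithOne.coe_mul, hee]
    have := hLI (fun _ => e) (fun _ => e) x
    rw [List.ofFn_const, List.reverse_replicate, List.prod_replicate] at this
    have hpow : (e : WithOne S) ^ k = (e : WithOne S) := by
      obtain ⟨r, rfl⟩ := Nat.exists_eq_add_of_le hk
      rw [add_comm]
      exact hid.pow_succ_eq r
    rw [hpow] at this
    have h2 : ((e * x * e : S) : WithOne S) = ((e * e : S) : WithOne S) := by
      push_cast
      exact this
    rw [hee] at h2
    exact WithOne.coe_inj.mp h2
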